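/- Sperner-type expansion example: Let G be a loopless digraph, and suppose the vertices (1-walks) of G admit a coloring by a trivially ordered set of n elements (i.e., a function c on vertices with c u ≠ c v whenever G u v). If n ≤ (r choose ⌈r/2⌉), then the edges (2-walks) of G can be colored by a set S of r elements so that for every 3-walk (v_1, v_2, v_3) the colors of the edges (v_1, v_2) and (v_2, v_3) differ. -/

import Mathlib

/-- A `k`-walk in the digraph `G` is a function `w : Fin k → V` such that
consecutive vertices are joined by an edge of `G`. -/
def IsWalk {V : Type*} (G : V → V → Prop) {k : ℕ} (w : Fin k → V) : Prop :=
  ∀ i : ℕ, ∀ h : i + 1 < k, G (w ⟨i, Nat.lt_of_succ_lt h⟩) (w ⟨i + 1, h⟩)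

theorem IsWalk.walkPrefix {V : Type*} {G : V → V → Prop} {k : ℕ} {u : Fin (k + 1) → V}
    (hu : IsWalk G u) : IsWalk G (fun i : Fin k => u i.castSucc) := by
  intro i h
  exact hu i (by omega)

theorem IsWalk.walkSuffix {V : Type*} {G : V → V → Prop} {k : ℕ} {u : Fin (k + 1) → V}
    (hu : IsWalk G u) : IsWalk G (fun i : Fin k => u i.succ) := by
  intro i h
  exact hu (i + 1) (by omega)

/-- The `k`-walks of `G`, as a subtype. -/
def Walks {V : Type*} (G : V → V → Prop) (k : ℕ) : Type _ :=
  {w : Fin k → V // IsWalk G w}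

/-- A `P`-coloring of the `k`-walks of `G`: for every `(k+1)`-walk `u`,
the color of its prefix `k`-walk is not `≤` the color of its suffix `k`-walk. -/
def IsPColoring {V : Type*} {P : Type*} [Preorder P] (G : V → V → Prop) (k : ℕ)
    (c : Walks G k → P) : Prop :=
  ∀ u : Walks G (k + 1),
    ¬ c ⟨fun i => u.1 i.castSucc, u.2.walkPrefix⟩ ≤ c ⟨fun i => u.1 i.succ, u.2.walkSuffix⟩

/-- **Sperner-type expansion example.** Suppose the vertices of a loopless digraph `G`
admit a coloring by a trivially ordered set of `n` elements (`G u v → c u ≠ c v`).  If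
`n ≤ (r choose ⌈r/2⌉)`, then the edges (2-walks) of `G` can be colored by a set of `r`
elements so that for every 3-walk `(v₁, v₂, v₃)` the colors of the edges `(v₁, v₂)` and
`(v₂, v₃)` differ. -/
theorem sperner_expansion_example {V : Type*} (G : V → V → Prop) (hG : ∀ v, ¬ G v v)
    (n r : ℕ) (hc : ∃ c : V → Fin n, ∀ u v : V, G u v → c u ≠ c v)
    (hnr : n ≤ Nat.choose r ((r + 1) / 2)) :
    ∃ d : {e : V × V // G e.1 e.2} → Fin r,
      ∀ w : Fin 3 → V, ∀ hw : IsWalk G w,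
        d ⟨(w ⟨0, by omega⟩, w ⟨1, by omega⟩), hw 0 (by omega)⟩ ≠
        d ⟨(w ⟨1, by omega⟩, w ⟨2, by omega⟩), hw 1 (by omega)⟩ := by
  classical
  obtain ⟨c, hcol⟩ := hc
  have hcard : Fintype.card {s : Finset (Fin r) // s.card = (r + 1) / 2} =
      Nat.choose r ((r + 1) / 2) := by
    rw [Fintype.card_subtype]
    have : Finset.univ.filter (fun s : Finset (Fin r) => s.card = (r + 1) / 2) =
        Finset.powersetCard ((r + 1) / 2) Finset.univ := by
      rw [Finset.powersetCard_eq_filter, Finset.powerset_univ]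
    rw [this, Finset.card_powersetCard, Finset.card_univ, Fintype.card_fin]
  obtain ⟨f⟩ : Nonempty (Fin n ↪ {s : Finset (Fin r) // s.card = (r + 1) / 2}) := by
    exact Function.Embedding.nonempty_of_card_le (by simpa [hcard])
  set A : Fin n → Finset (Fin r) := fun i => (f i).1 with hA
  have hAinj : Function.Injective A := fun i j h => f.injective (Subtype.ext h)
  have key : ∀ u v : V, G u v → (A (c u) \ A (c v)).Nonempty := by
    intro u v huv
    rw [Finset.sdiff_nonempty]
    intro hsub
    have : A (c u) = A (c v) :=
      Finset.eq_of_subset_of_card_le hsub (by rw [(f (c u)).2, (f (c v)).2])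
    exact hcol u v huv (hAinj this)
  refine ⟨fun e => (key e.1.1 e.1.2 e.2).choose, ?_⟩
  intro w hw heq
  have h1 := (key (w ⟨0, by omega⟩) (w ⟨1, by omega⟩) (hw 0 (by omega))).choose_spec
  have h2 := (key (w ⟨1, by omega⟩) (w ⟨2, by omega⟩) (hw 1 (by omega))).choose_spec
  beta_reduce at heq
  rw [heq] at h1
  rw [Finset.mem_sdiff] at h1 h2
  exact h1.2 (by convert h2.1 using 3)
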